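/- Under the Landweber Fejér monotonicity assumptions, the gradient update steps are square-summable: ∑_{k=0}^∞ ‖u_{k+1} − u_k‖² ≤ (M²/μ)‖u_0 − u*‖², where u_{k+1} − u_k = −F'(u_k)*(F(u_k) − φ). -/
import Mathlib


open RealInnerProductSpace

set_option maxHeartbeats 1000000 in
/-- Square-summability of the Landweber gradient update steps:
`∑ ‖u_{k+1} − u_k‖² ≤ (M²/μ)‖u₀ − u*‖²`. -/
theorem landweber_steps_square_summable
    {X Y : Type*} [NormedAddCommGroup X] [InnerProductSpace ℝ X] [CompleteSpace X]
    [NormedAddCommGroup Y] [InnerProductSpace ℝ Y] [CompleteSpace Y]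
    (F : X → Y) (F' : X → X →L[ℝ] Y) (hF : ∀ u, HasFDerivAt F (F' u) u)
    (B : Set X) (ustar : X) (φ : Y) (hsol : F ustar = φ) (hustar : ustar ∈ B)
    (M μ : ℝ) (hM : 0 < M) (hμ : 0 < μ)
    (hbound : ∀ u ∈ B, ‖F' u‖ ≤ M)
    (htcc : ∀ u ∈ B, ∀ v ∈ B,
      2 * ⟪F u - F v, F' u (u - v)⟫ ≥ (M ^ 2 + μ) * ‖F u - F v‖ ^ 2)
    (u : ℕ → X)
    (hiter : ∀ k, u (k + 1) = u k - ContinuousLinearMap.adjoint (F' (u k)) (F (u k) - φ))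
    (hin : ∀ k, u k ∈ B) :
    Summable (fun k => ‖u (k + 1) - u k‖ ^ 2) ∧
      ∑' k : ℕ, ‖u (k + 1) - u k‖ ^ 2 ≤ (M ^ 2 / μ) * ‖u 0 - ustar‖ ^ 2 := by
  have key : ∀ k, μ * ‖u (k + 1) - u k‖ ^ 2 ≤
      M ^ 2 * (‖u k - ustar‖ ^ 2 - ‖u (k + 1) - ustar‖ ^ 2) := by
    intro k
    set A := F' (u k) with hA
    set r := F (u k) - φ with hrdef
    have hr : r = F (u k) - F ustar := by rw [hrdef, hsol]
    have hstep : u (k + 1) - u k = -(ContinuousLinearMap.adjoint A r) := by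
      rw [hiter k]; abel
    -- norm of adjoint step
    have hAnorm : ‖ContinuousLinearMap.adjoint A r‖ ≤ M * ‖r‖ := by
      calc ‖ContinuousLinearMap.adjoint A r‖ ≤ ‖ContinuousLinearMap.adjoint A‖ * ‖r‖ :=
            (ContinuousLinearMap.adjoint A).le_opNorm r
        _ = ‖A‖ * ‖r‖ := by rw [ContinuousLinearMap.adjoint.norm_map]
        _ ≤ M * ‖r‖ := by
            gcongr
            exact hbound (u k) (hin k)
    have hAsq : ‖ContinuousLinearMap.adjoint A r‖ ^ 2 ≤ M ^ 2 * ‖r‖ ^ 2 := by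
      have h0 : (0:ℝ) ≤ ‖ContinuousLinearMap.adjoint A r‖ := norm_nonneg _
      nlinarith [norm_nonneg r]
    -- inner product via adjoint and tcc
    have hinner : ⟪u k - ustar, ContinuousLinearMap.adjoint A r⟫ = ⟪r, A (u k - ustar)⟫ := by
      rw [ContinuousLinearMap.adjoint_inner_right, real_inner_comm]
    have htcc' : 2 * ⟪r, A (u k - ustar)⟫ ≥ (M ^ 2 + μ) * ‖r‖ ^ 2 := by
      rw [hr]
      exact htcc (u k) (hin k) ustar hustar
    -- expand norm
    have hexp : ‖u (k + 1) - ustar‖ ^ 2 =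
        ‖u k - ustar‖ ^ 2 - 2 * ⟪u k - ustar, ContinuousLinearMap.adjoint A r⟫ +
          ‖ContinuousLinearMap.adjoint A r‖ ^ 2 := by
      have : u (k + 1) - ustar = (u k - ustar) - ContinuousLinearMap.adjoint A r := by
        rw [hiter k]; abel
      rw [this, @norm_sub_sq_real]
    have hsn : ‖u (k + 1) - u k‖ ^ 2 = ‖ContinuousLinearMap.adjoint A r‖ ^ 2 := by
      rw [hstep, norm_neg]
    rw [hsn]
    have hd : μ * ‖r‖ ^ 2 ≤ ‖u k - ustar‖ ^ 2 - ‖u (k + 1) - ustar‖ ^ 2 := by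
      rw [hexp, hinner]; linarith [htcc', hAsq]
    have h3 := mul_le_mul_of_nonneg_left hd (sq_nonneg M)
    have h4 := mul_le_mul_of_nonneg_left hAsq hμ.le
    nlinarith [h3, h4]
  have hsumle : ∀ n, ∑ k ∈ Finset.range n, ‖u (k + 1) - u k‖ ^ 2 ≤
      (M ^ 2 / μ) * ‖u 0 - ustar‖ ^ 2 := by
    intro n
    have h1 : μ * ∑ k ∈ Finset.range n, ‖u (k + 1) - u k‖ ^ 2 ≤
        M ^ 2 * (‖u 0 - ustar‖ ^ 2 - ‖u n - ustar‖ ^ 2) := by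
      calc μ * ∑ k ∈ Finset.range n, ‖u (k + 1) - u k‖ ^ 2
          = ∑ k ∈ Finset.range n, μ * ‖u (k + 1) - u k‖ ^ 2 := by rw [Finset.mul_sum]
        _ ≤ ∑ k ∈ Finset.range n, M ^ 2 * (‖u k - ustar‖ ^ 2 - ‖u (k + 1) - ustar‖ ^ 2) :=
            Finset.sum_le_sum fun k _ => key k
        _ = M ^ 2 * ∑ k ∈ Finset.range n, (‖u k - ustar‖ ^ 2 - ‖u (k + 1) - ustar‖ ^ 2) := by
            rw [Finset.mul_sum]
        _ = M ^ 2 * (‖u 0 - ustar‖ ^ 2 - ‖u n - ustar‖ ^ 2) := by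
            rw [Finset.sum_range_sub' (fun k => ‖u k - ustar‖ ^ 2) n]
    have h2 : μ * ∑ k ∈ Finset.range n, ‖u (k + 1) - u k‖ ^ 2 ≤
        M ^ 2 * ‖u 0 - ustar‖ ^ 2 := by
      have := mul_nonneg (sq_nonneg M) (sq_nonneg (‖u n - ustar‖))
      nlinarith [h1]
    rw [div_mul_eq_mul_div, le_div_iff₀ hμ]
    linarith [h2]
  have hsummable : Summable (fun k => ‖u (k + 1) - u k‖ ^ 2) :=
    summable_of_sum_range_le (fun k => sq_nonneg _) hsumle
  exact ⟨hsummable, Summable.tsum_le_of_sum_range_le hsummable hsumle⟩
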